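/- Let Q ∈ ℝ^{k×t} have orthonormal columns and suppose Γ ∈ ℝ^{k×m} satisfies: (1) Γ^T Q = 0; (2) ‖Γ‖_2 ≤ M; (3) ‖Γ^T u‖_2 ≥ η‖u‖_2 for every s-sparse vector u ∈ ℝ^k, where 0 < η ≤ M. Then for every unit vector x ∈ ℝ^t, the vector Qx has at least s+1 entries of magnitude at least η/(3M√k). -/

import Mathlib

set_option maxHeartbeats 1000000

open Matrix

/-- Euclidean norm of a vector. -/
noncomputable def enorm2 {n : Type*} [Fintype n] (x : n → ℝ) : ℝ :=
  Real.sqrt (∑ i, x i ^ 2)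

lemma enorm_nonneg' {n : Type*} [Fintype n] (x : n → ℝ) : 0 ≤ enorm2 x :=
  Real.sqrt_nonneg _

lemma enorm_sq' {n : Type*} [Fintype n] (x : n → ℝ) : enorm2 x ^ 2 = ∑ i, x i ^ 2 :=
  Real.sq_sqrt (Finset.sum_nonneg fun _ _ => sq_nonneg _)

lemma dot_le_enorm {n : Type*} [Fintype n] (x y : n → ℝ) :
    x ⬝ᵥ y ≤ enorm2 x * enorm2 y := by
  have h := Finset.sum_mul_sq_le_sq_mul_sq Finset.univ x y
  refine (le_abs_self _).trans ?_
  have habs : |x ⬝ᵥ y| = Real.sqrt ((x ⬝ᵥ y) ^ 2) := (Real.sqrt_sq_eq_abs _).symm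
  rw [habs, dotProduct]
  calc Real.sqrt ((∑ i, x i * y i) ^ 2)
      ≤ Real.sqrt ((∑ i, x i ^ 2) * ∑ i, y i ^ 2) := Real.sqrt_le_sqrt h
    _ = enorm2 x * enorm2 y := by
        rw [Real.sqrt_mul (Finset.sum_nonneg fun _ _ => sq_nonneg _)]; rfl

/-- Non-sparsification certificates certify non-sparsification: if `Γ` satisfies
orthogonality `ΓᵀQ = 0`, the spectral norm bound `‖Γ‖₂ ≤ M`, and the injective RIP
`‖Γᵀu‖ ≥ η‖u‖` for all `s`-sparse `u`, then for every unit vector `x`, the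
vector `Qx` has at least `s+1` entries of magnitude at least `η/(3M√k)`. -/
theorem stmt4 (k t m s : ℕ) (η M : ℝ) (hη : 0 < η) (hηM : η ≤ M)
    (Q : Matrix (Fin k) (Fin t) ℝ) (hQ : Qᵀ * Q = 1)
    (Γ : Matrix (Fin k) (Fin m) ℝ)
    (horth : Γᵀ * Q = 0)
    (hnorm : ∀ w : Fin m → ℝ, enorm2 (Γ.mulVec w) ≤ M * enorm2 w)
    (hrip : ∀ u : Fin k → ℝ,
      (Finset.univ.filter fun i => u i ≠ 0).card ≤ s →
      η * enorm2 u ≤ enorm2 (Γᵀ.mulVec u))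
    (x : Fin t → ℝ) (hx : enorm2 x = 1) :
    s + 1 ≤ (Finset.univ.filter fun i =>
      η / (3 * M * Real.sqrt k) ≤ |Q.mulVec x i|).card := by
  have hM : 0 < M := hη.trans_le hηM
  -- transpose norm bound
  have htrans : ∀ u : Fin k → ℝ, enorm2 (Γᵀ.mulVec u) ≤ M * enorm2 u := by
    intro u
    set w := Γᵀ.mulVec u with hw
    have huw : u ᵥ* Γ = w := (Matrix.mulVec_transpose Γ u).symm
    have h1 : enorm2 w ^ 2 = u ⬝ᵥ Γ.mulVec w := by
      rw [enorm_sq', Matrix.dotProduct_mulVec, huw, dotProduct]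
      simp [sq]
    have h2 : u ⬝ᵥ Γ.mulVec w ≤ enorm2 u * (M * enorm2 w) :=
      (dot_le_enorm u _).trans (by
        have := hnorm w
        nlinarith [enorm_nonneg' u])
    by_cases h0 : enorm2 w = 0
    · rw [h0]; exact mul_nonneg hM.le (enorm_nonneg' u)
    · have hwpos : 0 < enorm2 w := lt_of_le_of_ne (enorm_nonneg' w) (Ne.symm h0)
      nlinarith [h1, h2]
  set v := Q.mulVec x with hv
  -- k = 0 impossible
  rcases Nat.eq_zero_or_pos k with hk0 | hkpos
  · exfalso
    rcases Nat.eq_zero_or_pos t with ht0 | htpos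
    · subst ht0
      simp [enorm2] at hx
    · have := congrFun (congrFun hQ ⟨0, htpos⟩) ⟨0, htpos⟩
      subst hk0
      simp [Matrix.mul_apply, Matrix.one_apply] at this
  have hsqk : (0:ℝ) < Real.sqrt k := Real.sqrt_pos.mpr (by exact_mod_cast hkpos)
  -- enorm2 v = 1
  have hvnorm : enorm2 v = 1 := by
    have h1 : v ⬝ᵥ v = x ⬝ᵥ x := by
      conv_lhs => rw [hv]
      rw [Matrix.dotProduct_mulVec, ← Matrix.mulVec_transpose,
        Matrix.mulVec_mulVec, hQ, Matrix.one_mulVec]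
    have h2 : enorm2 v ^ 2 = 1 := by
      have hx2 : (∑ i, x i ^ 2) = 1 := by
        have := enorm_sq' x; rw [hx] at this; linarith [this]
      rw [enorm_sq']
      have hvv : (∑ i, v i ^ 2) = v ⬝ᵥ v := by rw [dotProduct]; simp [sq]
      have hxx : x ⬝ᵥ x = ∑ i, x i ^ 2 := by rw [dotProduct]; simp [sq]
      rw [hvv, h1, hxx, hx2]
    nlinarith [enorm_nonneg' v]
  -- Γᵀ v = 0
  have hGv : Γᵀ.mulVec v = 0 := by
    rw [hv, Matrix.mulVec_mulVec, horth, Matrix.zero_mulVec]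
  set τ := η / (3 * M * Real.sqrt k) with hτ
  have hτpos : 0 < τ := by positivity
  by_contra hcon
  push_neg at hcon
  set S := Finset.univ.filter fun i => τ ≤ |v i| with hS
  have hScard : S.card ≤ s := by omega
  set a : Fin k → ℝ := fun i => if i ∈ S then v i else 0 with ha
  set b : Fin k → ℝ := fun i => if i ∈ S then 0 else v i with hb
  have hab : ∀ i, v i = a i + b i := by
    intro i; simp only [ha, hb]; split <;> simp
  -- a is sparse
  have hasup : (Finset.univ.filter fun i => a i ≠ 0).card ≤ s := by
    refine le_trans (Finset.card_le_card ?_) hScard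
    intro i hi
    simp only [Finset.mem_filter, Finset.mem_univ, true_and] at hi ⊢
    by_contra h
    simp only [ha] at hi
    rw [if_neg (by simpa [hS] using h)] at hi
    exact hi rfl
  -- Γᵀ a = - Γᵀ b
  have hGab : Γᵀ.mulVec a = -(Γᵀ.mulVec b) := by
    have hsum0 : Γᵀ.mulVec a + Γᵀ.mulVec b = 0 := by
      rw [← Matrix.mulVec_add]
      have hvab : a + b = v := by funext i; rw [hab i]; rfl
      rw [hvab, hGv]
    exact eq_neg_of_add_eq_zero_left hsum0
  have henormneg : enorm2 (-(Γᵀ.mulVec b)) = enorm2 (Γᵀ.mulVec b) := by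
    rw [enorm2, enorm2]; congr 1; apply Finset.sum_congr rfl; intro i _; simp
  -- enorm2 b bound
  have hbsmall : enorm2 b ≤ η / (3 * M) := by
    have hsum : (∑ i, b i ^ 2) ≤ k * τ ^ 2 := by
      calc (∑ i, b i ^ 2) ≤ ∑ _i : Fin k, τ ^ 2 := by
            apply Finset.sum_le_sum
            intro i _
            by_cases hiS : i ∈ S
            · have hbi : b i = 0 := by simp [hb, hiS]
              rw [hbi]; nlinarith [sq_nonneg τ]
            · have hbi : b i = v i := by simp [hb, hiS]
              have hlt : |v i| < τ := by
                by_contra h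
                push_neg at h
                exact hiS (Finset.mem_filter.mpr ⟨Finset.mem_univ i, h⟩)
              rw [hbi]
              nlinarith [abs_nonneg (v i), sq_abs (v i)]
        _ = k * τ ^ 2 := by rw [Finset.sum_const, Finset.card_univ, Fintype.card_fin, nsmul_eq_mul]
    have hle : enorm2 b ≤ Real.sqrt (k * τ ^ 2) := Real.sqrt_le_sqrt hsum
    refine hle.trans ?_
    rw [Real.sqrt_mul (by positivity), Real.sqrt_sq hτpos.le]
    have heq : Real.sqrt k * τ = η / (3 * M) := by
      rw [hτ]; field_simp
    rw [heq]
  -- enorm2 a bound from RIP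
  have hachain : η * enorm2 a ≤ M * (η / (3 * M)) := by
    calc η * enorm2 a ≤ enorm2 (Γᵀ.mulVec a) := hrip a hasup
      _ = enorm2 (Γᵀ.mulVec b) := by rw [hGab, henormneg]
      _ ≤ M * enorm2 b := htrans b
      _ ≤ M * (η / (3 * M)) := by nlinarith [hbsmall]
  have hasmall : enorm2 a ≤ 1 / 3 := by
    have heq : M * (η / (3 * M)) = η / 3 := by field_simp
    rw [heq] at hachain
    nlinarith
  -- Pythagoras
  have hpyth : enorm2 a ^ 2 + enorm2 b ^ 2 = 1 := by
    rw [enorm_sq', enorm_sq', ← Finset.sum_add_distrib]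
    have hpt : ∀ i, a i ^ 2 + b i ^ 2 = v i ^ 2 := by
      intro i; simp only [ha, hb]; split <;> ring
    rw [Finset.sum_congr rfl fun i _ => hpt i]
    have := enorm_sq' v; rw [hvnorm] at this; linarith
  have hb13 : enorm2 b ≤ 1 / 3 := hbsmall.trans (by
    rw [div_le_div_iff₀ (by positivity) (by norm_num)]; linarith)
  nlinarith [enorm_nonneg' a, enorm_nonneg' b]
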